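/- Let X and Y be independent Weibull random variables with parameters (α_RS, β, γ) and (α_RA, β, γ), with α_RS, α_RA, γ > 0, and suppose the means of X and Y are RS and RA respectively (so RS = α_RS·Γ(1+1/γ) + β and RA = α_RA·Γ(1+1/γ) + β). Then Prob(X > Y) = (RS − β)^γ / ((RS − β)^γ + (RA − β)^γ). -/

import Mathlib

open MeasureTheory Real Set Filter Topology

/-- The Weibull probability density function with parameters `α` (scale),
`β` (shift) and `γ` (shape). -/
noncomputable def weibullPDF (α β γ : ℝ) (x : ℝ) : ℝ :=
  if β ≤ x then (γ / α) * ((x - β) / α) ^ (γ - 1) * Real.exp (-((x - β) / α) ^ γ) else 0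

/-- The Weibull measure: Lebesgue measure with the Weibull density. -/
noncomputable def weibullMeasure (α β γ : ℝ) : Measure ℝ :=
  volume.withDensity fun x => ENNReal.ofReal (weibullPDF α β γ x)

section Aux

variable {α β γ : ℝ}

lemma weibull_deriv (hα : 0 < α) (hγ : 0 < γ) {d : ℝ} (hd : 0 < d) {x : ℝ} (hx : β < x) :
    HasDerivAt (fun y => -(1 / d) * Real.exp (-(d * ((y - β) / α) ^ γ)))
      ((γ / α) * ((x - β) / α) ^ (γ - 1) * Real.exp (-(d * ((x - β) / α) ^ γ))) x := by
  have ht : 0 < (x - β) / α := div_pos (by linarith) hα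
  have h1 : HasDerivAt (fun y : ℝ => (y - β) / α) (1 / α) x := by
    simpa using ((hasDerivAt_id x).sub_const β).div_const α
  have h2 : HasDerivAt (fun t : ℝ => t ^ γ) (γ * ((x - β) / α) ^ (γ - 1)) ((x - β) / α) :=
    Real.hasDerivAt_rpow_const (Or.inl ht.ne')
  have h3 := h2.comp x h1
  have h4 := (((h3.const_mul d).neg).exp).const_mul (-(1 / d))
  refine h4.congr_deriv ?_
  simp only [Pi.neg_apply, Function.comp_apply]
  field_simp

lemma weibull_cont (hγ : 0 < γ) (d : ℝ) :
    Continuous (fun y : ℝ => -(1 / d) * Real.exp (-(d * ((y - β) / α) ^ γ))) := by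
  have h0 : Continuous (fun y : ℝ => ((y - β) / α) ^ γ) := by
    refine continuous_iff_continuousAt.mpr fun y => ?_
    exact (Real.continuousAt_rpow_const _ _ (Or.inr hγ.le)).comp (by fun_prop)
  exact continuous_const.mul (Real.continuous_exp.comp ((continuous_const.mul h0).neg))

lemma weibull_tendsto (hα : 0 < α) (hγ : 0 < γ) {d : ℝ} (hd : 0 < d) :
    Tendsto (fun y : ℝ => -(1 / d) * Real.exp (-(d * ((y - β) / α) ^ γ))) atTop (𝓝 0) := by
  have t1 : Tendsto (fun y : ℝ => (y - β) / α) atTop atTop := by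
    apply Tendsto.atTop_div_const hα
    simpa [sub_eq_add_neg] using tendsto_atTop_add_const_right atTop (-β) tendsto_id
  have t2 : Tendsto (fun y : ℝ => d * ((y - β) / α) ^ γ) atTop atTop :=
    ((tendsto_rpow_atTop hγ).comp t1).const_mul_atTop hd
  have t3 : Tendsto (fun y : ℝ => Real.exp (-(d * ((y - β) / α) ^ γ))) atTop (𝓝 0) :=
    Real.tendsto_exp_atBot.comp (tendsto_neg_atBot_iff.mpr t2)
  simpa using t3.const_mul (-(1 / d))

lemma weibull_tail (hα : 0 < α) (hγ : 0 < γ) {d : ℝ} (hd : 0 < d) {a : ℝ} (ha : β ≤ a) :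
    IntegrableOn
      (fun x => (γ / α) * ((x - β) / α) ^ (γ - 1) * Real.exp (-(d * ((x - β) / α) ^ γ)))
      (Ioi a) volume ∧
    ∫ x in Ioi a, (γ / α) * ((x - β) / α) ^ (γ - 1) * Real.exp (-(d * ((x - β) / α) ^ γ))
      = (1 / d) * Real.exp (-(d * ((a - β) / α) ^ γ)) := by
  have hderiv : ∀ x ∈ Ioi a,
      HasDerivAt (fun y => -(1 / d) * Real.exp (-(d * ((y - β) / α) ^ γ)))
        ((γ / α) * ((x - β) / α) ^ (γ - 1) * Real.exp (-(d * ((x - β) / α) ^ γ))) x :=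
    fun x hx => weibull_deriv hα hγ hd (lt_of_le_of_lt ha hx)
  have hpos : ∀ x ∈ Ioi a,
      0 ≤ (γ / α) * ((x - β) / α) ^ (γ - 1) * Real.exp (-(d * ((x - β) / α) ^ γ)) := by
    intro x hx
    have hxb : (0:ℝ) ≤ (x - β) / α := div_nonneg (by simp only [mem_Ioi] at hx; linarith) hα.le
    exact mul_nonneg (mul_nonneg (div_nonneg hγ.le hα.le) (Real.rpow_nonneg hxb _))
      (Real.exp_nonneg _)
  have hcont := (weibull_cont (α := α) (β := β) hγ d).continuousWithinAt (x := a) (s := Ici a)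
  have htt := weibull_tendsto (α := α) (β := β) hα hγ hd
  refine ⟨integrableOn_Ioi_deriv_of_nonneg hcont hderiv hpos htt, ?_⟩
  rw [integral_Ioi_of_hasDerivAt_of_nonneg hcont hderiv hpos htt]
  ring

lemma weibullPDF_measurable (α β γ : ℝ) : Measurable (weibullPDF α β γ) := by
  unfold weibullPDF
  refine Measurable.ite (measurableSet_le measurable_const measurable_id) ?_ measurable_const
  apply Measurable.mul
  · exact (measurable_const.mul (((measurable_id.sub_const β).div_const α).pow measurable_const))
  · exact (Real.measurable_exp.comp
      ((((measurable_id.sub_const β).div_const α).pow measurable_const).neg))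

lemma weibull_Ici (hα : 0 < α) (hγ : 0 < γ) {a : ℝ} (ha : β ≤ a) :
    weibullMeasure α β γ (Ici a) = ENNReal.ofReal (Real.exp (-(((a - β) / α) ^ γ))) := by
  rw [weibullMeasure, withDensity_apply _ measurableSet_Ici,
    ← Measure.restrict_congr_set Ioi_ae_eq_Ici]
  have hcongr : ∀ x ∈ Ioi a, ENNReal.ofReal (weibullPDF α β γ x)
      = ENNReal.ofReal
        ((γ / α) * ((x - β) / α) ^ (γ - 1) * Real.exp (-(1 * ((x - β) / α) ^ γ))) := by
    intro x hx
    simp only [mem_Ioi] at hx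
    rw [weibullPDF, if_pos (by linarith), one_mul]
  rw [setLIntegral_congr_fun measurableSet_Ioi hcongr]
  have h := weibull_tail (β := β) hα hγ one_pos ha
  rw [← ofReal_integral_eq_lintegral_ofReal h.1]
  · rw [h.2]; norm_num
  · refine (ae_restrict_iff' measurableSet_Ioi).mpr (ae_of_all _ fun x hx => ?_)
    have hxb : (0:ℝ) ≤ (x - β) / α :=
      div_nonneg (by simp only [mem_Ioi] at hx; linarith) hα.le
    exact mul_nonneg (mul_nonneg (div_nonneg hγ.le hα.le) (Real.rpow_nonneg hxb _))
      (Real.exp_nonneg _)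

lemma weibull_univ (hα : 0 < α) (hγ : 0 < γ) : weibullMeasure α β γ univ = 1 := by
  have h1 : weibullMeasure α β γ (Iio β) = 0 := by
    rw [weibullMeasure, withDensity_apply _ measurableSet_Iio]
    have : ∀ x ∈ Iio β, ENNReal.ofReal (weibullPDF α β γ x) = 0 := by
      intro x hx
      simp only [mem_Iio] at hx
      rw [weibullPDF, if_neg (not_le.mpr hx)]; exact ENNReal.ofReal_zero
    rw [setLIntegral_congr_fun measurableSet_Iio this, lintegral_zero]
  have h2 := weibull_Ici (β := β) hα hγ (le_refl β)
  have : (univ : Set ℝ) = Iio β ∪ Ici β := by simp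
  rw [this, measure_union (Iio_disjoint_Ici le_rfl) measurableSet_Ici, h1, h2, sub_self,
    zero_div, Real.zero_rpow hγ.ne', neg_zero, Real.exp_zero, ENNReal.ofReal_one, zero_add]

lemma weibull_Iio (hα : 0 < α) (hγ : 0 < γ) {x : ℝ} (hx : β ≤ x) :
    weibullMeasure α β γ (Iio x) = ENNReal.ofReal (1 - Real.exp (-(((x - β) / α) ^ γ))) := by
  have h1 := weibull_Ici (β := β) hα hγ hx
  have hset : (Iio x) = univ \ Ici x := by rw [← Set.compl_Ici, Set.compl_eq_univ_diff]
  rw [hset, measure_diff (subset_univ _) measurableSet_Ici.nullMeasurableSet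
    (h1 ▸ ENNReal.ofReal_ne_top), weibull_univ hα hγ, h1, ← ENNReal.ofReal_one,
    ← ENNReal.ofReal_sub _ (Real.exp_nonneg _)]

instance weibullMeasure_sfinite (α β γ : ℝ) : SFinite (weibullMeasure α β γ) := by
  unfold weibullMeasure; infer_instance

end Aux

/-- **Pythagorean Won-Loss Formula in terms of means.** If `X`, `Y` are
independent Weibulls with parameters `(αRS, β, γ)` and `(αRA, β, γ)` having
means `RS` and `RA`, then `Prob(X > Y) = (RS-β)^γ / ((RS-β)^γ + (RA-β)^γ)`. -/
theorem pythagorean_won_loss_means (αRS αRA β γ RS RA : ℝ)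
    (hRS : 0 < αRS) (hRA : 0 < αRA) (hγ : 0 < γ)
    (hmRS : RS = αRS * Real.Gamma (1 + 1 / γ) + β)
    (hmRA : RA = αRA * Real.Gamma (1 + 1 / γ) + β) :
    ((weibullMeasure αRS β γ).prod (weibullMeasure αRA β γ)) {p : ℝ × ℝ | p.2 < p.1} =
      ENNReal.ofReal ((RS - β) ^ γ / ((RS - β) ^ γ + (RA - β) ^ γ)) := by
  classical
  set c : ℝ := (αRS / αRA) ^ γ with hc
  have hcpos : 0 < c := Real.rpow_pos_of_pos (div_pos hRS hRA) _
  have h1c : (0:ℝ) < 1 + c := by linarith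
  -- the inner function
  set H : ℝ → ℝ := fun x =>
    (γ / αRS) * ((x - β) / αRS) ^ (γ - 1) * Real.exp (-(((x - β) / αRS) ^ γ)) *
      (1 - Real.exp (-(((x - β) / αRA) ^ γ))) with hH
  have hs : MeasurableSet {p : ℝ × ℝ | p.2 < p.1} :=
    measurableSet_lt measurable_snd measurable_fst
  rw [Measure.prod_apply hs]
  have hpre : ∀ x : ℝ, (Prod.mk x ⁻¹' {p : ℝ × ℝ | p.2 < p.1}) = Iio x := by
    intro x; ext y; simp
  simp_rw [hpre]
  have hmono : Measurable fun x => weibullMeasure αRA β γ (Iio x) :=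
    Monotone.measurable (fun a b hab => measure_mono (Iio_subset_Iio hab))
  rw [weibullMeasure, lintegral_withDensity_eq_lintegral_mul _
    (fun s hs => (weibullPDF_measurable αRS β γ).ennreal_ofReal hs) hmono]
  -- pointwise identification with ofReal ∘ indicator
  have hpt : ∀ x : ℝ,
      ((fun x => ENNReal.ofReal (weibullPDF αRS β γ x)) * fun x =>
        weibullMeasure αRA β γ (Iio x)) x
        = ENNReal.ofReal ((Ici β).indicator H x) := by
    intro x
    by_cases hx : β ≤ x
    · have hxb : (0:ℝ) ≤ (x - β) / αRS := div_nonneg (by linarith) hRS.le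
      rw [Pi.mul_apply, weibull_Iio hRA hγ hx, Set.indicator_of_mem (mem_Ici.mpr hx), hH,
        weibullPDF, if_pos hx, ← ENNReal.ofReal_mul
        (mul_nonneg (mul_nonneg (div_nonneg hγ.le hRS.le) (Real.rpow_nonneg hxb _))
          (Real.exp_nonneg _))]
    · rw [Pi.mul_apply, weibullPDF, if_neg hx, Set.indicator_of_notMem (by simpa using hx)]
      simp
  rw [lintegral_congr hpt]
  -- decompose H on Ioi β as a difference of two integrable functions
  have hEqOn : ∀ x ∈ Ioi β, H x =
      (γ / αRS) * ((x - β) / αRS) ^ (γ - 1) * Real.exp (-(1 * ((x - β) / αRS) ^ γ)) -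
      (γ / αRS) * ((x - β) / αRS) ^ (γ - 1) * Real.exp (-((1 + c) * ((x - β) / αRS) ^ γ)) := by
    intro x hx
    simp only [mem_Ioi] at hx
    have hxb : (0:ℝ) ≤ x - β := by linarith
    have hsplit : ((x - β) / αRA) ^ γ = c * ((x - β) / αRS) ^ γ := by
      rw [hc, ← Real.mul_rpow (div_nonneg hRS.le hRA.le)
        (div_nonneg hxb hRS.le)]
      congr 1
      field_simp
    rw [hH]
    have : Real.exp (-(((x - β) / αRS) ^ γ)) * Real.exp (-(((x - β) / αRA) ^ γ))
        = Real.exp (-((1 + c) * ((x - β) / αRS) ^ γ)) := by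
      rw [← Real.exp_add, hsplit]; congr 1; ring
    rw [one_mul]
    linear_combination (-(γ / αRS * ((x - β) / αRS) ^ (γ - 1))) * this
  have ht1 := weibull_tail (β := β) hRS hγ one_pos (le_refl β)
  have ht2 := weibull_tail (β := β) hRS hγ h1c (le_refl β)
  have hIntIoi : IntegrableOn H (Ioi β) volume := by
    exact IntegrableOn.congr_fun (ht1.1.sub ht2.1) (fun x hx => (hEqOn x hx).symm)
      measurableSet_Ioi
  have hIntIci : IntegrableOn H (Ici β) volume := by
    rwa [← integrableOn_Ici_iff_integrableOn_Ioi] at hIntIoi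
  have hInd : Integrable ((Ici β).indicator H) volume :=
    (integrable_indicator_iff measurableSet_Ici).mpr hIntIci
  have hHnn : ∀ x, 0 ≤ (Ici β).indicator H x := by
    intro x
    by_cases hx : β ≤ x
    · rw [Set.indicator_of_mem (mem_Ici.mpr hx), hH]
      have hxb : (0:ℝ) ≤ (x - β) / αRS := div_nonneg (by linarith) hRS.le
      have h1 : Real.exp (-(((x - β) / αRA) ^ γ)) ≤ 1 := by
        rw [Real.exp_le_one_iff]
        simp only [neg_nonpos]
        exact Real.rpow_nonneg (div_nonneg (by linarith) hRA.le) _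
      exact mul_nonneg (mul_nonneg (mul_nonneg (div_nonneg hγ.le hRS.le)
        (Real.rpow_nonneg hxb _)) (Real.exp_nonneg _)) (by linarith)
    · rw [Set.indicator_of_notMem (by simpa using hx)]
  rw [← ofReal_integral_eq_lintegral_ofReal hInd (ae_of_all _ hHnn)]
  congr 1
  -- compute the integral
  have hval : ∫ x, (Ici β).indicator H x = c / (1 + c) := by
    rw [integral_indicator measurableSet_Ici, integral_Ici_eq_integral_Ioi,
      setIntegral_congr_fun measurableSet_Ioi hEqOn, integral_sub ht1.1 ht2.1, ht1.2, ht2.2]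
    simp only [sub_self, zero_div, Real.zero_rpow hγ.ne', mul_zero, neg_zero, Real.exp_zero,
      mul_one]
    field_simp
    ring
  rw [hval]
  -- final arithmetic
  have hG : 0 < Real.Gamma (1 + 1 / γ) := Real.Gamma_pos_of_pos (by positivity)
  have hRSb : RS - β = αRS * Real.Gamma (1 + 1 / γ) := by rw [hmRS]; ring
  have hRAb : RA - β = αRA * Real.Gamma (1 + 1 / γ) := by rw [hmRA]; ring
  rw [hRSb, hRAb, Real.mul_rpow hRS.le hG.le, Real.mul_rpow hRA.le hG.le, hc,
    Real.div_rpow hRS.le hRA.le]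
  have hA : 0 < αRS ^ γ := Real.rpow_pos_of_pos hRS _
  have hB : 0 < αRA ^ γ := Real.rpow_pos_of_pos hRA _
  have hGg : 0 < Real.Gamma (1 + 1 / γ) ^ γ := Real.rpow_pos_of_pos hG _
  have hs1 : αRA ^ γ ≠ 0 := hB.ne'
  have hs2 : αRS ^ γ * Real.Gamma (1 + 1 / γ) ^ γ + αRA ^ γ * Real.Gamma (1 + 1 / γ) ^ γ ≠ 0 :=
    ne_of_gt (by nlinarith [mul_pos hA hGg, mul_pos hB hGg])
  have hs3 : αRA ^ γ + αRS ^ γ ≠ 0 := ne_of_gt (by linarith)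
  field_simp
  ring
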